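/- Let (S_α)_{α<ω₁} be a transfinite Schreier sequence, and let α < ω₁ be a successor ordinal, α = β + 1. If G ∈ S_α^MAX, then G = G_1 ∪ ⋯ ∪ G_m where G_1 < G_2 < ⋯ < G_m, each G_i ∈ S_β^MAX, and m = min G_1. -/

import Mathlib

open Filter Topology NormedSpace

noncomputable section

/-- A combinatorial family: a family of finite subsets of `ℕ` containing all
singletons and hereditary for inclusion. -/
def IsCombFamily (𝓕 : Set (Finset ℕ)) : Prop :=
  (∀ n : ℕ, ({n} : Finset ℕ) ∈ 𝓕) ∧ ∀ F ∈ 𝓕, ∀ G : Finset ℕ, G ⊆ F → G ∈ 𝓕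

/-- A family of finite subsets of `ℕ` is compact if it is closed in `{0,1}^ℕ`,
identifying sets with their characteristic functions. -/
def IsCompactFamily (𝓕 : Set (Finset ℕ)) : Prop :=
  IsClosed {f : ℕ → Bool | ∃ F ∈ 𝓕, ∀ n, f n = true ↔ n ∈ F}

/-- The closure of the family `𝓕` in `{0,1}^ℕ`: all sets every finite subset of
which belongs to `𝓕`. -/
def famClosure (𝓕 : Set (Finset ℕ)) : Set (Set ℕ) :=
  {A | ∀ G : Finset ℕ, ↑G ⊆ A → G ∈ 𝓕}

/-- Maximal elements of a family. -/
def famMax (𝓕 : Set (Finset ℕ)) : Set (Finset ℕ) :=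
  {F | F ∈ 𝓕 ∧ ∀ G ∈ 𝓕, F ⊆ G → F = G}

/-- A spreading family. -/
def IsSpreading (𝓕 : Set (Finset ℕ)) : Prop :=
  ∀ F ∈ 𝓕, ∀ σ : ℕ → ℕ, (∀ n ∈ F, n ≤ σ n) → Finset.image σ F ∈ 𝓕

/-- `X`, with distinguished sequence `e`, is (a realization of) the `p`-convexification
`X_{𝓕,p}` of the combinatorial Banach space associated with `𝓕`: the canonical vectors
have dense linear span, and finitely supported vectors have the norm
`sup { (∑_{i∈F} |a i|^p)^{1/p} : F ∈ 𝓕 }`. -/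
structure IsXFp (𝕜 : Type*) [RCLike 𝕜] (𝓕 : Set (Finset ℕ)) (p : ℝ)
    (X : Type*) [NormedAddCommGroup X] [NormedSpace 𝕜 X] (e : ℕ → X) : Prop where
  dense_span : Dense (Submodule.span 𝕜 (Set.range e) : Set X)
  norm_eq : ∀ a : ℕ →₀ 𝕜,
    ‖∑ i ∈ a.support, a i • e i‖ =
      sSup {r : ℝ | ∃ F ∈ 𝓕, r = (∑ i ∈ F, ‖a i‖ ^ p) ^ (1 / p)}

/-- `(b, bs)` is a normalized 1-unconditional Schauder basis of `E` together with its
coordinate functionals. -/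
structure IsNUBasis (𝕜 : Type*) [RCLike 𝕜] (E : Type*)
    [NormedAddCommGroup E] [NormedSpace 𝕜 E]
    (b : ℕ → E) (bs : ℕ → StrongDual 𝕜 E) : Prop where
  biortho : ∀ i j, bs i (b j) = if i = j then 1 else 0
  normalized : ∀ i, ‖b i‖ = 1
  expansion : ∀ x : E,
    Tendsto (fun N => ∑ i ∈ Finset.range N, bs i x • b i) atTop (nhds x)
  unconditional : ∀ a : ℕ →₀ 𝕜, ∀ ω : ℕ → 𝕜, (∀ i, ‖ω i‖ = 1) →
    ‖∑ i ∈ a.support, ω i • a i • b i‖ = ‖∑ i ∈ a.support, a i • b i‖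

/-- `X`, with distinguished sequence `e`, is (a realization of) `X_{𝓕,E}`. -/
structure IsXFE (𝕜 : Type*) [RCLike 𝕜] (𝓕 : Set (Finset ℕ))
    (E : Type*) [NormedAddCommGroup E] [NormedSpace 𝕜 E] (b : ℕ → E)
    (X : Type*) [NormedAddCommGroup X] [NormedSpace 𝕜 X] (e : ℕ → X) : Prop where
  dense_span : Dense (Submodule.span 𝕜 (Set.range e) : Set X)
  norm_eq : ∀ a : ℕ →₀ 𝕜,
    ‖∑ i ∈ a.support, a i • e i‖ =
      sSup {r : ℝ | ∃ F ∈ 𝓕, r = ‖∑ i ∈ F, a i • b i‖}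

/-- A normed space is strictly convex if its unit sphere contains no nontrivial
segments. -/
def IsStrictlyConvexSp (Y : Type*) [NormedAddCommGroup Y] : Prop :=
  ∀ u v : Y, ‖u‖ = 1 → ‖v‖ = 1 → u ≠ v → ‖u + v‖ < 2

/-- `x` is an extreme point of the closed unit ball of `Y`. -/
def IsExtremePtBall {Y : Type*} [NormedAddCommGroup Y] (x : Y) : Prop :=
  ‖x‖ ≤ 1 ∧ ∀ u v : Y, ‖u‖ ≤ 1 → ‖v‖ ≤ 1 → u + v = x + x → u = x ∧ v = x

/-- `x` is an extreme point of the closed unit ball of the subspace `M`. -/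
def IsExtremePtBallIn {𝕜 Y : Type*} [RCLike 𝕜] [NormedAddCommGroup Y] [NormedSpace 𝕜 Y]
    (M : Submodule 𝕜 Y) (x : Y) : Prop :=
  x ∈ M ∧ ‖x‖ ≤ 1 ∧
    ∀ u v : Y, u ∈ M → v ∈ M → ‖u‖ ≤ 1 → ‖v‖ ≤ 1 → u + v = x + x → u = x ∧ v = x

/-- The basis `b` is strictly 1-unconditional. -/
def StrictlyUnconditional (𝕜 : Type*) [RCLike 𝕜] {E : Type*}
    [NormedAddCommGroup E] [NormedSpace 𝕜 E] (b : ℕ → E) : Prop :=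
  ∀ a c : ℕ →₀ 𝕜, (∀ i, ‖a i‖ ≤ ‖c i‖) → (∃ i, ‖a i‖ < ‖c i‖) →
    ‖∑ i ∈ c.support, a i • b i‖ < ‖∑ i ∈ c.support, c i • b i‖

/-- The basis `b` is 1-symmetric: every permutation of `ℕ` induces a surjective
linear isometry of `E` permuting the basis vectors. -/
def IsSymmetricBasis (𝕜 : Type*) [RCLike 𝕜] {E : Type*}
    [NormedAddCommGroup E] [NormedSpace 𝕜 E] (b : ℕ → E) : Prop :=
  ∀ σ : Equiv.Perm ℕ, ∃ T : E ≃ₗᵢ[𝕜] E, ∀ i, T (b i) = b (σ i)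

/-- Condition (H): for `j ≠ k`, any linear isometric embedding of `span(bs j, bs k)`
into the dual of `E` sends `bs j` and `bs k` to functionals with disjoint supports. -/
def CondH (𝕜 : Type*) [RCLike 𝕜] {E : Type*} [NormedAddCommGroup E] [NormedSpace 𝕜 E]
    (b : ℕ → E) (bs : ℕ → StrongDual 𝕜 E) : Prop :=
  ∀ j k : ℕ, j ≠ k →
    ∀ T : ↥(Submodule.span 𝕜 {bs j, bs k}) →ₗᵢ[𝕜] StrongDual 𝕜 E,
      ∀ i : ℕ,
        T ⟨bs j, Submodule.subset_span (Set.mem_insert _ _)⟩ (b i) = 0 ∨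
        T ⟨bs k, Submodule.subset_span (Set.mem_insert_of_mem _ rfl)⟩ (b i) = 0

/-- `span(u,v)` is isometrically equal to `ℓ₂(2)`. -/
def SpanIsL2 (𝕜 : Type*) [RCLike 𝕜] {Y : Type*} [NormedAddCommGroup Y] [NormedSpace 𝕜 Y]
    (u v : Y) : Prop :=
  ∀ a c : 𝕜, ‖a • u + c • v‖ ^ 2 = ‖a‖ ^ 2 + ‖c‖ ^ 2


/-- The first uncountable ordinal. -/
def omega1 : Ordinal := (Cardinal.aleph 1).ord

/-- `E < F` for finite sets: every element of `E` is smaller than every element of `F`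
(vacuously true if one of them is empty). -/
def OrdSets (E F : Finset ℕ) : Prop := ∀ x ∈ E, ∀ y ∈ F, x < y

/-- A transfinite Schreier sequence `(S_α)_{α<ω₁}`, together with, for each limit
ordinal `α < ω₁`, the preassigned strictly increasing approximating sequence
`(α_n)_{n≥1}` (encoded by `approx α n = α_{n+1}`).  Here `ℕ` starts at `1`: members
of the families are finite sets of positive integers. -/
structure SchreierSeq where
  S : Ordinal → Set (Finset ℕ)
  approx : Ordinal → ℕ → Ordinal
  S_zero : S 0 = {F : Finset ℕ | F.card ≤ 1 ∧ ∀ i ∈ F, 1 ≤ i}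
  S_succ : ∀ β : Ordinal, β < omega1 →
    S (β + 1) = {G : Finset ℕ | ∃ (n : ℕ) (E : Fin n → Finset ℕ),
      (∀ i, E i ∈ S β) ∧ (∀ i j : Fin n, i < j → OrdSets (E i) (E j)) ∧
      (∀ x ∈ G, n ≤ x) ∧ G = Finset.univ.biUnion E}
  approx_lt : ∀ α : Ordinal, α < omega1 → Order.IsSuccLimit α → ∀ n, approx α n < α
  approx_mono : ∀ α : Ordinal, α < omega1 → Order.IsSuccLimit α → StrictMono (approx α)
  approx_sup : ∀ α : Ordinal, α < omega1 → Order.IsSuccLimit α → ∀ β < α, ∃ n, β ≤ approx α n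
  S_limit : ∀ α : Ordinal, α < omega1 → Order.IsSuccLimit α →
    S α = {F : Finset ℕ | ∃ n : ℕ, F ∈ S (approx α n) ∧ ∀ x ∈ F, n + 1 ≤ x}

/-- A transfinite Schreier sequence is good if for every limit ordinal the
approximating sequence consists of successor ordinals `β_n + 1` with `(S_{β_n})`
increasing. -/
def SchreierSeq.IsGood (Ss : SchreierSeq) : Prop :=
  ∀ α : Ordinal, α < omega1 → Order.IsSuccLimit α →
    ∃ B : ℕ → Ordinal, (∀ n, Ss.approx α n = B n + 1) ∧
      ∀ n, Ss.S (B n) ⊆ Ss.S (B (n + 1))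

/-- Characteristic function of a finite set, as an element of `{0,1}^ℕ`. -/
def chf (F : Finset ℕ) : ℕ → Bool := fun n => decide (n ∈ F)

/-- The set of accumulation points of `A`. -/
def derivSet (A : Set (ℕ → Bool)) : Set (ℕ → Bool) :=
  {x | ClusterPt x (Filter.principal (A \ {x}))}

/-- The iterated Cantor–Bendixson derivatives of `K ⊆ {0,1}^ℕ`. -/
def cbIter (K : Set (ℕ → Bool)) (o : Ordinal) : Set (ℕ → Bool) :=
  Ordinal.limitRecOn o K (fun _ ih => derivSet ih)
    (fun o _ ih => ⋂ (ξ : Set.Iio o), ih ξ.1 ξ.2)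

namespace SchreierAux

lemma singleton_mem (Ss : SchreierSeq) :
    ∀ β : Ordinal, β < omega1 → ∀ k : ℕ, 1 ≤ k → ({k} : Finset ℕ) ∈ Ss.S β := by
  intro β
  induction β using Ordinal.induction with
  | _ β IH =>
  intro hβ k hk
  rcases Ordinal.zero_or_succ_or_isSuccLimit β with h0 | ⟨γ, hγ⟩ | hlim
  · subst h0
    rw [Ss.S_zero]
    refine ⟨by simp, ?_⟩
    intro i hi
    simp only [Finset.mem_singleton] at hi
    omega
  · rw [← Ordinal.add_one_eq_succ] at hγ
    subst hγ
    have hγ1 : γ < γ + 1 := by rw [Ordinal.add_one_eq_succ]; exact Order.lt_succ γ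
    have hγω : γ < omega1 := lt_trans hγ1 hβ
    rw [Ss.S_succ γ hγω]
    refine ⟨1, fun _ => {k}, fun _ => IH γ hγ1 hγω k hk, ?_, ?_, ?_⟩
    · intro i j hij
      have hi := i.isLt
      have hj := j.isLt
      rw [Fin.lt_def] at hij
      omega
    · intro x hx
      simp only [Finset.mem_singleton] at hx
      omega
    · simp
  · rw [Ss.S_limit β hβ hlim]
    refine ⟨0, IH _ (Ss.approx_lt β hβ hlim 0) (lt_trans (Ss.approx_lt β hβ hlim 0) hβ) k hk, ?_⟩
    intro x hx
    simp only [Finset.mem_singleton] at hx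
    omega

lemma hered (Ss : SchreierSeq) :
    ∀ β : Ordinal, β < omega1 → ∀ F ∈ Ss.S β, ∀ E : Finset ℕ, E ⊆ F → E ∈ Ss.S β := by
  intro β
  induction β using Ordinal.induction with
  | _ β IH =>
  intro hβ F hF E hEF
  rcases Ordinal.zero_or_succ_or_isSuccLimit β with h0 | ⟨γ, hγ⟩ | hlim
  · subst h0
    rw [Ss.S_zero] at hF ⊢
    exact ⟨le_trans (Finset.card_le_card hEF) hF.1, fun i hi => hF.2 i (hEF hi)⟩
  · rw [← Ordinal.add_one_eq_succ] at hγ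
    subst hγ
    have hγ1 : γ < γ + 1 := by rw [Ordinal.add_one_eq_succ]; exact Order.lt_succ γ
    have hγω : γ < omega1 := lt_trans hγ1 hβ
    rw [Ss.S_succ γ hγω] at hF ⊢
    obtain ⟨n, Hs, h1, h2, h3, h4⟩ := hF
    refine ⟨n, fun i => E ∩ Hs i, fun i => IH γ hγ1 hγω (Hs i) (h1 i) _ Finset.inter_subset_right, ?_, ?_, ?_⟩
    · intro i j hij x hx y hy
      exact h2 i j hij x (Finset.mem_of_mem_inter_right hx) y (Finset.mem_of_mem_inter_right hy)
    · intro x hx; exact h3 x (hEF hx)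
    · ext a
      simp only [Finset.mem_biUnion, Finset.mem_univ, true_and, Finset.mem_inter]
      constructor
      · intro ha
        have haF := hEF ha
        rw [h4] at haF
        obtain ⟨i, -, hi⟩ := Finset.mem_biUnion.1 haF
        exact ⟨i, ha, hi⟩
      · rintro ⟨i, ha, -⟩
        exact ha
  · rw [Ss.S_limit β hβ hlim] at hF ⊢
    obtain ⟨n, hn, hmin⟩ := hF
    exact ⟨n, IH _ (Ss.approx_lt β hβ hlim n) (lt_trans (Ss.approx_lt β hβ hlim n) hβ) F hn E hEF,
      fun x hx => hmin x (hEF hx)⟩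

lemma pos (Ss : SchreierSeq) :
    ∀ β : Ordinal, β < omega1 → ∀ F ∈ Ss.S β, ∀ x ∈ F, 1 ≤ x := by
  intro β
  induction β using Ordinal.induction with
  | _ β IH =>
  intro hβ F hF x hx
  rcases Ordinal.zero_or_succ_or_isSuccLimit β with h0 | ⟨γ, hγ⟩ | hlim
  · subst h0
    rw [Ss.S_zero] at hF
    exact hF.2 x hx
  · rw [← Ordinal.add_one_eq_succ] at hγ
    subst hγ
    have hγ1 : γ < γ + 1 := by rw [Ordinal.add_one_eq_succ]; exact Order.lt_succ γ
    have hγω : γ < omega1 := lt_trans hγ1 hβ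
    rw [Ss.S_succ γ hγω] at hF
    obtain ⟨n, Hs, h1, h2, h3, h4⟩ := hF
    rw [h4] at hx
    obtain ⟨i, -, hi⟩ := Finset.mem_biUnion.1 hx
    exact IH γ hγ1 hγω (Hs i) (h1 i) x hi
  · rw [Ss.S_limit β hβ hlim] at hF
    obtain ⟨n, hn, hmin⟩ := hF
    exact IH _ (Ss.approx_lt β hβ hlim n) (lt_trans (Ss.approx_lt β hβ hlim n) hβ) F hn x hx

end SchreierAux


namespace SchreierAux

/-- Extension at the last index: add a large new element to the last piece. -/
lemma ext_last (Ss : SchreierSeq) (β : Ordinal)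
    (hAdd : ∀ (E H : Finset ℕ) (z : ℕ), E ⊆ H → E ≠ H → H ∈ Ss.S β → 1 ≤ z →
      (∀ x ∈ E, x < z) → insert z E ∈ Ss.S β)
    {n : ℕ} (P : Fin n → Finset ℕ) (i0 : Fin n) (H : Finset ℕ)
    (hlast : n ≤ i0.val + 1)
    (hP : ∀ i, P i ∈ Ss.S β) (hord : ∀ i j : Fin n, i < j → OrdSets (P i) (P j))
    (hEH : P i0 ⊆ H) (hne : P i0 ≠ H) (hH : H ∈ Ss.S β)
    (z : ℕ) (hz1 : 1 ≤ z) (hz : ∀ (j : Fin n), ∀ x ∈ P j, x < z) :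
    ∃ P' : Fin n → Finset ℕ, (∀ i, P' i ∈ Ss.S β) ∧
      (∀ i j : Fin n, i < j → OrdSets (P' i) (P' j)) ∧
      Finset.univ.biUnion P' = insert z (Finset.univ.biUnion P) := by
  refine ⟨fun j => if j = i0 then insert z (P i0) else P j, ?_, ?_, ?_⟩
  · intro i
    by_cases h : i = i0
    · simp only [h, if_pos rfl]
      exact hAdd _ H z hEH hne hH hz1 (hz i0)
    · simp only [if_neg h]
      exact hP i
  · intro i j hij
    have hji : j ≤ i0 := by
      have := j.isLt
      rw [Fin.le_def]; omega
    have hi : i ≠ i0 := by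
      intro h; subst h
      exact absurd (lt_of_lt_of_le hij hji) (lt_irrefl i)
    by_cases hj : j = i0
    · simp only [if_neg hi, if_pos hj]
      intro x hx y hy
      rcases Finset.mem_insert.1 hy with rfl | hy'
      · exact hz i x hx
      · exact hord i i0 (hj ▸ hij) x hx y hy'
    · simp only [if_neg hi, if_neg hj]
      exact hord i j hij
  · ext a
    simp only [Finset.mem_biUnion, Finset.mem_univ, true_and, Finset.mem_insert]
    constructor
    · rintro ⟨i, hi⟩
      by_cases h : i = i0
      · rw [if_pos h] at hi
        rcases Finset.mem_insert.1 hi with rfl | hi'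
        · exact Or.inl rfl
        · exact Or.inr ⟨i0, hi'⟩
      · rw [if_neg h] at hi
        exact Or.inr ⟨i, hi⟩
    · rintro (rfl | ⟨i, hi⟩)
      · exact ⟨i0, by rw [if_pos rfl]; exact Finset.mem_insert_self _ _⟩
      · by_cases h : i = i0
        · exact ⟨i0, by rw [if_pos rfl]; exact Finset.mem_insert_of_mem (h ▸ hi)⟩
        · exact ⟨i, by rw [if_neg h]; exact hi⟩

/-- Cascade extension: if some piece is properly contained in a member of `S β`,
then a new large element `z` can be added, keeping a valid decomposition. -/
lemma ext_aux (Ss : SchreierSeq) (β : Ordinal)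
    (hAdd : ∀ (E H : Finset ℕ) (z : ℕ), E ⊆ H → E ≠ H → H ∈ Ss.S β → 1 ≤ z →
      (∀ x ∈ E, x < z) → insert z E ∈ Ss.S β)
    (hHer : ∀ F ∈ Ss.S β, ∀ E : Finset ℕ, E ⊆ F → E ∈ Ss.S β)
    (hPos : ∀ F ∈ Ss.S β, ∀ x ∈ F, 1 ≤ x) :
    ∀ (d : ℕ) {n : ℕ} (P : Fin n → Finset ℕ) (i0 : Fin n) (H : Finset ℕ),
      n ≤ i0.val + d + 1 →
      (∀ i, P i ∈ Ss.S β) → (∀ i j : Fin n, i < j → OrdSets (P i) (P j)) →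
      P i0 ⊆ H → P i0 ≠ H → H ∈ Ss.S β →
      ∀ z : ℕ, 1 ≤ z → (∀ (j : Fin n), ∀ x ∈ P j, x < z) →
      ∃ P' : Fin n → Finset ℕ, (∀ i, P' i ∈ Ss.S β) ∧
        (∀ i j : Fin n, i < j → OrdSets (P' i) (P' j)) ∧
        Finset.univ.biUnion P' = insert z (Finset.univ.biUnion P) := by
  intro d
  induction d with
  | zero =>
    intro n P i0 H hd hP hord hEH hne hH z hz1 hz
    exact ext_last Ss β hAdd P i0 H (by omega) hP hord hEH hne hH z hz1 hz
  | succ d IH =>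
    intro n P i0 H hd hP hord hEH hne hH z hz1 hz
    by_cases hlast : n ≤ i0.val + 1
    · exact ext_last Ss β hAdd P i0 H hlast hP hord hEH hne hH z hz1 hz
    · push_neg at hlast
      set i1 : Fin n := ⟨i0.val + 1, hlast⟩ with hi1
      have hi01 : i0 < i1 := by rw [Fin.lt_def]; simp [hi1]
      have hne01 : i0 ≠ i1 := ne_of_lt hi01
      have hne10 : i1 ≠ i0 := (ne_of_lt hi01).symm
      by_cases hE1 : P i1 = ∅
      · -- swap pieces i0 and i1
        set Q : Fin n → Finset ℕ :=
          fun j => if j = i0 then P i1 else if j = i1 then P i0 else P j with hQ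
        have hQi0 : Q i0 = P i1 := by simp [hQ]
        have hQi1 : Q i1 = P i0 := by simp [hQ, hne10]
        have hQother : ∀ j, j ≠ i0 → j ≠ i1 → Q j = P j := by
          intro j h0 h1; simp [hQ, h0, h1]
        have hQP : ∀ i, Q i ∈ Ss.S β := by
          intro i
          by_cases h0 : i = i0
          · rw [h0, hQi0]; exact hP i1
          · by_cases h1 : i = i1
            · rw [h1, hQi1]; exact hP i0
            · rw [hQother i h0 h1]; exact hP i
        have hQord : ∀ i j : Fin n, i < j → OrdSets (Q i) (Q j) := by
          intro i j hij x hx y hy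
          by_cases h0 : i = i0
          · rw [h0, hQi0, hE1] at hx
            exact absurd hx (Finset.notMem_empty x)
          · by_cases hj0 : j = i0
            · rw [hj0, hQi0, hE1] at hy
              exact absurd hy (Finset.notMem_empty y)
            · by_cases h1 : i = i1
              · subst h1
                rw [hQi1] at hx
                by_cases hj1 : j = i1
                · exact absurd (hj1 ▸ hij) (lt_irrefl _)
                · rw [hQother j hj0 hj1] at hy
                  exact hord i0 j (lt_trans hi01 hij) x hx y hy
              · rw [hQother i h0 h1] at hx
                by_cases hj1 : j = i1
                · subst hj1
                  rw [hQi1] at hy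
                  have : i < i0 := by
                    rw [Fin.lt_def] at hij ⊢
                    simp only [hi1] at hij
                    have : i.val ≠ i0.val := fun hc => h0 (Fin.ext hc)
                    omega
                  exact hord i i0 this x hx y hy
                · rw [hQother j hj0 hj1] at hy
                  exact hord i j hij x hx y hy
        have hbiQ : Finset.univ.biUnion Q = Finset.univ.biUnion P := by
          ext a
          simp only [Finset.mem_biUnion, Finset.mem_univ, true_and]
          constructor
          · rintro ⟨i, hi⟩
            by_cases h0 : i = i0
            · exact ⟨i1, by rwa [h0, hQi0] at hi⟩
            · by_cases h1 : i = i1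
              · exact ⟨i0, by rwa [h1, hQi1] at hi⟩
              · exact ⟨i, by rwa [hQother i h0 h1] at hi⟩
          · rintro ⟨i, hi⟩
            by_cases h0 : i = i0
            · exact ⟨i1, by rw [hQi1]; rwa [h0] at hi⟩
            · by_cases h1 : i = i1
              · exact ⟨i0, by rw [hQi0]; rwa [h1] at hi⟩
              · exact ⟨i, by rw [hQother i h0 h1]; exact hi⟩
        obtain ⟨P', h1', h2', h3'⟩ := IH Q i1 H (by simp only [hi1]; omega) hQP hQord
          (by rw [hQi1]; exact hEH) (by rw [hQi1]; exact hne) hH z hz1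
          (by
            intro j x hx
            by_cases h0 : j = i0
            · rw [h0, hQi0] at hx; exact hz i1 x hx
            · by_cases h1 : j = i1
              · rw [h1, hQi1] at hx; exact hz i0 x hx
              · rw [hQother j h0 h1] at hx; exact hz j x hx)
        exact ⟨P', h1', h2', by rw [h3', hbiQ]⟩
      · -- move the minimum of piece i1 down to piece i0
        have hne1 : (P i1).Nonempty := Finset.nonempty_iff_ne_empty.2 hE1
        set w := (P i1).min' hne1 with hw
        have hwmem : w ∈ P i1 := Finset.min'_mem _ _
        have hw1 : 1 ≤ w := hPos _ (hP i1) w hwmem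
        have hwgt : ∀ x ∈ P i0, x < w := fun x hx => hord i0 i1 hi01 x hx w hwmem
        have hwlt : ∀ y ∈ P i1, y ≠ w → w < y := by
          intro y hy hyne
          exact lt_of_le_of_ne (Finset.min'_le _ y hy) (Ne.symm hyne)
        set Q : Fin n → Finset ℕ :=
          fun j => if j = i0 then insert w (P i0) else if j = i1 then (P i1).erase w else P j
          with hQ
        have hQi0 : Q i0 = insert w (P i0) := by simp [hQ]
        have hQi1 : Q i1 = (P i1).erase w := by simp [hQ, hne10]
        have hQother : ∀ j, j ≠ i0 → j ≠ i1 → Q j = P j := by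
          intro j h0 h1; simp [hQ, h0, h1]
        have hQP : ∀ i, Q i ∈ Ss.S β := by
          intro i
          by_cases h0 : i = i0
          · rw [h0, hQi0]; exact hAdd _ H w hEH hne hH hw1 hwgt
          · by_cases h1 : i = i1
            · rw [h1, hQi1]; exact hHer _ (hP i1) _ (Finset.erase_subset _ _)
            · rw [hQother i h0 h1]; exact hP i
        have hQord : ∀ i j : Fin n, i < j → OrdSets (Q i) (Q j) := by
          intro i j hij x hx y hy
          by_cases h0 : i = i0
          · rw [h0, hQi0] at hx
            rcases Finset.mem_insert.1 hx with rfl | hx'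
            -- x = w
            · by_cases hj1 : j = i1
              · rw [hj1, hQi1] at hy
                exact hwlt y (Finset.mem_of_mem_erase hy) (Finset.ne_of_mem_erase hy)
              · have hj0 : j ≠ i0 := by rw [← h0]; exact (ne_of_lt hij).symm
                rw [hQother j hj0 hj1] at hy
                have hij1 : i1 < j := by
                  have hiv : (i0 : ℕ) < (j : ℕ) := by
                    rw [← h0]; exact Fin.lt_def.1 hij
                  have hjv : (j : ℕ) ≠ (i0 : ℕ) + 1 := by
                    intro hc; exact hj1 (Fin.ext (by simp [hi1, hc]))
                  rw [Fin.lt_def]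
                  simp only [hi1]; omega
                exact hord i1 j hij1 w hwmem y hy
            · by_cases hj1 : j = i1
              · rw [hj1, hQi1] at hy
                exact hord i0 i1 hi01 x hx' y (Finset.mem_of_mem_erase hy)
              · have hj0 : j ≠ i0 := by rw [← h0]; exact (ne_of_lt hij).symm
                rw [hQother j hj0 hj1] at hy
                exact hord i0 j (h0 ▸ hij) x hx' y hy
          · by_cases hj0 : j = i0
            · rw [hj0, hQi0] at hy
              have hii1 : i < i1 := lt_trans (hj0 ▸ hij) hi01
              have hi' : i ≠ i1 := ne_of_lt hii1
              rw [hQother i h0 hi'] at hx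
              rcases Finset.mem_insert.1 hy with rfl | hy'
              · exact hord i i1 hii1 x hx w hwmem
              · exact hord i i0 (hj0 ▸ hij) x hx y hy'
            · by_cases h1 : i = i1
              · subst h1
                rw [hQi1] at hx
                have hj1 : j ≠ i1 := (ne_of_lt hij).symm
                rw [hQother j hj0 hj1] at hy
                exact hord i1 j hij x (Finset.mem_of_mem_erase hx) y hy
              · rw [hQother i h0 h1] at hx
                by_cases hj1 : j = i1
                · subst hj1
                  rw [hQi1] at hy
                  exact hord i i1 hij x hx y (Finset.mem_of_mem_erase hy)
                · rw [hQother j hj0 hj1] at hy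
                  exact hord i j hij x hx y hy
        have hbiQ : Finset.univ.biUnion Q = Finset.univ.biUnion P := by
          ext a
          simp only [Finset.mem_biUnion, Finset.mem_univ, true_and]
          constructor
          · rintro ⟨i, hi⟩
            by_cases h0 : i = i0
            · rw [h0, hQi0] at hi
              rcases Finset.mem_insert.1 hi with rfl | hi'
              · exact ⟨i1, hwmem⟩
              · exact ⟨i0, hi'⟩
            · by_cases h1 : i = i1
              · rw [h1, hQi1] at hi
                exact ⟨i1, Finset.mem_of_mem_erase hi⟩
              · exact ⟨i, by rwa [hQother i h0 h1] at hi⟩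
          · rintro ⟨i, hi⟩
            by_cases h0 : i = i0
            · exact ⟨i0, by rw [hQi0]; exact Finset.mem_insert_of_mem (h0 ▸ hi)⟩
            · by_cases h1 : i = i1
              · subst h1
                by_cases haw : a = w
                · exact ⟨i0, by rw [hQi0, haw]; exact Finset.mem_insert_self _ _⟩
                · exact ⟨i1, by rw [hQi1]; exact Finset.mem_erase.2 ⟨haw, hi⟩⟩
              · exact ⟨i, by rw [hQother i h0 h1]; exact hi⟩
        obtain ⟨P', h1', h2', h3'⟩ := IH Q i1 (P i1) (by simp only [hi1]; omega) hQP hQord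
          (by rw [hQi1]; exact Finset.erase_subset _ _)
          (by
            rw [hQi1]
            intro hc
            exact (Finset.erase_eq_self.1 hc) hwmem)
          (hP i1) z hz1
          (by
            intro j x hx
            by_cases h0 : j = i0
            · rw [h0, hQi0] at hx
              rcases Finset.mem_insert.1 hx with rfl | hx'
              · exact hz i1 w hwmem
              · exact hz i0 x hx'
            · by_cases h1 : j = i1
              · rw [h1, hQi1] at hx; exact hz i1 x (Finset.mem_of_mem_erase hx)
              · rw [hQother j h0 h1] at hx; exact hz j x hx)
        exact ⟨P', h1', h2', by rw [h3', hbiQ]⟩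

end SchreierAux


namespace SchreierAux

/-- If `E` is properly contained in a member of `S β`, then `E` together with any
element larger than all of `E` belongs to `S β`. -/
lemma add (Ss : SchreierSeq) :
    ∀ β : Ordinal, β < omega1 → ∀ (E H : Finset ℕ) (z : ℕ), E ⊆ H → E ≠ H →
      H ∈ Ss.S β → 1 ≤ z → (∀ x ∈ E, x < z) → insert z E ∈ Ss.S β := by
  intro β
  induction β using Ordinal.induction with
  | _ β IH =>
  intro hβ E H z hEH hne hH hz1 hzE
  by_cases hEe : E = ∅
  · subst hEe
    have hsz : insert z (∅ : Finset ℕ) = {z} := by simp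
    rw [hsz]
    exact singleton_mem Ss β hβ z hz1
  · have hEne : E.Nonempty := Finset.nonempty_iff_ne_empty.2 hEe
    rcases Ordinal.zero_or_succ_or_isSuccLimit β with h0 | ⟨γ, hγ⟩ | hlim
    · subst h0
      rw [Ss.S_zero] at hH
      have hcard : E.card < H.card := Finset.card_lt_card (ssubset_of_subset_of_ne hEH hne)
      have h1E : 1 ≤ E.card := Finset.card_pos.2 hEne
      have h1H := hH.1
      omega
    · rw [← Ordinal.add_one_eq_succ] at hγ
      subst hγ
      have hγ1 : γ < γ + 1 := by rw [Ordinal.add_one_eq_succ]; exact Order.lt_succ γ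
      have hγω : γ < omega1 := lt_trans hγ1 hβ
      rw [Ss.S_succ γ hγω] at hH ⊢
      obtain ⟨n, Hs, h1, h2, h3, h4⟩ := hH
      set P : Fin n → Finset ℕ := fun i => E ∩ Hs i with hPdef
      have hPmem : ∀ i, P i ∈ Ss.S γ :=
        fun i => hered Ss γ hγω (Hs i) (h1 i) _ Finset.inter_subset_right
      have hPord : ∀ i j : Fin n, i < j → OrdSets (P i) (P j) := by
        intro i j hij x hx y hy
        exact h2 i j hij x (Finset.mem_of_mem_inter_right hx) y (Finset.mem_of_mem_inter_right hy)
      have hbiP : Finset.univ.biUnion P = E := by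
        ext a
        simp only [Finset.mem_biUnion, Finset.mem_univ, true_and, hPdef, Finset.mem_inter]
        constructor
        · rintro ⟨i, ha, -⟩; exact ha
        · intro ha
          have haH := hEH ha
          rw [h4] at haH
          obtain ⟨i, -, hi⟩ := Finset.mem_biUnion.1 haH
          exact ⟨i, ha, hi⟩
      have hex : ∃ i0 : Fin n, P i0 ≠ Hs i0 := by
        by_contra hc
        push_neg at hc
        apply hne
        refine Finset.Subset.antisymm hEH ?_
        intro a ha
        rw [h4] at ha
        obtain ⟨i, -, hi⟩ := Finset.mem_biUnion.1 ha
        have : a ∈ P i := by rw [hc i]; exact hi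
        exact Finset.mem_of_mem_inter_left this
      obtain ⟨i0, hi0⟩ := hex
      obtain ⟨P', hm', ho', hu'⟩ := ext_aux Ss γ (IH γ hγ1 hγω) (hered Ss γ hγω) (pos Ss γ hγω)
        n P i0 (Hs i0) (by omega) hPmem hPord Finset.inter_subset_right hi0 (h1 i0) z hz1
        (fun j x hx => hzE x (Finset.mem_of_mem_inter_left hx))
      refine ⟨n, P', hm', ho', ?_, ?_⟩
      · intro x hx
        rcases Finset.mem_insert.1 hx with rfl | hx'
        · obtain ⟨e, he⟩ := hEne
          have := h3 e (hEH he)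
          have := hzE e he
          omega
        · exact h3 x (hEH hx')
      · rw [hu', hbiP]
    · rw [Ss.S_limit β hβ hlim] at hH ⊢
      obtain ⟨nn, hHn, hmin⟩ := hH
      refine ⟨nn, IH _ (Ss.approx_lt β hβ hlim nn) (lt_trans (Ss.approx_lt β hβ hlim nn) hβ)
        E H z hEH hne hHn hz1 hzE, ?_⟩
      intro x hx
      rcases Finset.mem_insert.1 hx with rfl | hx'
      · obtain ⟨e, he⟩ := hEne
        have := hmin e (hEH he)
        have := hzE e he
        omega
      · exact hmin x (hEH hx')

end SchreierAux


/-- Lemma (maxsucc).  If `α = β + 1 < ω₁` and `G ∈ S_α^MAX`, then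
`G = G_1 ∪ ⋯ ∪ G_m` with `G_1 < ⋯ < G_m`, each `G_i ∈ S_β^MAX`, and `m = min G_1`
(equivalently, `m = min G`). -/
theorem maximal_schreier_set_decomposition
    (Ss : SchreierSeq) (β : Ordinal) (hβ : β + 1 < omega1)
    (G : Finset ℕ) (hG : G ∈ famMax (Ss.S (β + 1))) :
    ∃ (m : ℕ) (Gs : Fin m → Finset ℕ),
      (∀ i, Gs i ∈ famMax (Ss.S β)) ∧
      (∀ i j : Fin m, i < j → OrdSets (Gs i) (Gs j)) ∧
      G = Finset.univ.biUnion Gs ∧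
      m ∈ G ∧ (∀ x ∈ G, m ≤ x) := by
  classical
  obtain ⟨hGmem, hGmax⟩ := hG
  have hβ1 : β < β + 1 := by rw [Ordinal.add_one_eq_succ]; exact Order.lt_succ β
  have hβω : β < omega1 := lt_trans hβ1 hβ
  -- G is nonempty
  have hGne : G.Nonempty := by
    rw [Finset.nonempty_iff_ne_empty]
    intro h
    have h1 : ({1} : Finset ℕ) ∈ Ss.S (β + 1) := SchreierAux.singleton_mem Ss _ hβ 1 le_rfl
    have := hGmax {1} h1 (by rw [h]; exact Finset.empty_subset _)
    rw [h] at this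
    exact Finset.singleton_ne_empty 1 this.symm
  have hmG : G.min' hGne ∈ G := G.min'_mem hGne
  have hmle : ∀ x ∈ G, G.min' hGne ≤ x := fun x hx => G.min'_le x hx
  -- witness decomposition
  have hGmem' := hGmem
  rw [Ss.S_succ β hβω] at hGmem'
  obtain ⟨n, E, hE1, hE2, hE3, hE4⟩ := hGmem'
  -- nonempty pieces
  set T : Finset (Fin n) := Finset.univ.filter (fun i => (E i).Nonempty) with hT
  set r := T.card with hr
  set ι := T.orderIsoOfFin rfl with hι
  set Gs : Fin r → Finset ℕ := fun i => E ((ι i : Fin n)) with hGsdef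
  have hGsne : ∀ i, (Gs i).Nonempty := fun i => (Finset.mem_filter.1 (ι i).2).2
  have hGsmem : ∀ i, Gs i ∈ Ss.S β := fun i => hE1 _
  have hGsord : ∀ i j : Fin r, i < j → OrdSets (Gs i) (Gs j) := by
    intro i j hij
    exact hE2 _ _ (ι.strictMono hij)
  have hGsU : Finset.univ.biUnion Gs = G := by
    ext a
    simp only [Finset.mem_biUnion, Finset.mem_univ, true_and]
    constructor
    · rintro ⟨i, hi⟩
      rw [hE4]
      exact Finset.mem_biUnion.2 ⟨(ι i : Fin n), Finset.mem_univ _, hi⟩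
    · intro ha
      have ha' : a ∈ Finset.univ.biUnion E := by rw [← hE4]; exact ha
      obtain ⟨j, -, hj⟩ := Finset.mem_biUnion.1 ha'
      have hjT : j ∈ T := Finset.mem_filter.2 ⟨Finset.mem_univ _, ⟨a, hj⟩⟩
      refine ⟨ι.symm ⟨j, hjT⟩, ?_⟩
      show a ∈ E ((ι (ι.symm ⟨j, hjT⟩) : Fin n))
      rw [OrderIso.apply_symm_apply]
      exact hj
  have hGsG : ∀ (j : Fin r), ∀ x ∈ Gs j, x ∈ G := by
    intro j x hx
    rw [← hGsU]
    exact Finset.mem_biUnion.2 ⟨j, Finset.mem_univ _, hx⟩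
  -- r ≤ min G
  have hnm : n ≤ G.min' hGne := hE3 _ hmG
  have hrn : r ≤ n := by
    have := Finset.card_le_univ T
    simpa using this
  -- min G ≤ r
  have hrm : G.min' hGne ≤ r := by
    by_contra hcon
    push_neg at hcon
    set k := G.max' hGne + 1 with hk
    have hkgt : ∀ x ∈ G, x < k := fun x hx => Nat.lt_succ_of_le (G.le_max' x hx)
    have hk1 : 1 ≤ k := Nat.succ_le_succ (Nat.zero_le _)
    set Ps : Fin (r + 1) → Finset ℕ :=
      fun i => if h : (i : ℕ) < r then Gs ⟨(i : ℕ), h⟩ else {k} with hPs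
    have hPslt : ∀ (i : Fin (r + 1)) (h : (i : ℕ) < r), Ps i = Gs ⟨(i : ℕ), h⟩ :=
      fun i h => dif_pos h
    have hPsge : ∀ (i : Fin (r + 1)), ¬((i : ℕ) < r) → Ps i = {k} :=
      fun i h => dif_neg h
    have hmem : insert k G ∈ Ss.S (β + 1) := by
      rw [Ss.S_succ β hβω]
      refine ⟨r + 1, Ps, ?_, ?_, ?_, ?_⟩
      · intro i
        by_cases h : (i : ℕ) < r
        · rw [hPslt i h]; exact hGsmem _
        · rw [hPsge i h]; exact SchreierAux.singleton_mem Ss β hβω k hk1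
      · intro i j hij x hx y hy
        by_cases hi : (i : ℕ) < r
        · rw [hPslt i hi] at hx
          by_cases hj : (j : ℕ) < r
          · rw [hPslt j hj] at hy
            exact hGsord ⟨i, hi⟩ ⟨j, hj⟩ hij x hx y hy
          · rw [hPsge j hj] at hy
            rw [Finset.mem_singleton] at hy
            subst hy
            exact hkgt x (hGsG _ x hx)
        · exfalso
          have hjr := j.isLt
          have := Fin.lt_def.1 hij
          omega
      · intro x hx
        rcases Finset.mem_insert.1 hx with rfl | hx'
        · have := G.le_max' _ hmG
          omega
        · have := hmle x hx'
          omega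
      · ext a
        simp only [Finset.mem_biUnion, Finset.mem_univ, true_and, Finset.mem_insert]
        constructor
        · rintro (rfl | ha)
          · refine ⟨⟨r, Nat.lt_succ_self r⟩, ?_⟩
            rw [hPsge ⟨r, Nat.lt_succ_self r⟩ (lt_irrefl r)]
            exact Finset.mem_singleton_self k
          · rw [← hGsU] at ha
            obtain ⟨i, -, hi⟩ := Finset.mem_biUnion.1 ha
            refine ⟨⟨(i : ℕ), Nat.lt_succ_of_lt i.isLt⟩, ?_⟩
            rw [hPslt ⟨(i : ℕ), Nat.lt_succ_of_lt i.isLt⟩ i.isLt]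
            exact hi
        · rintro ⟨i, hi⟩
          by_cases h : (i : ℕ) < r
          · rw [hPslt i h] at hi
            exact Or.inr (hGsG _ a hi)
          · rw [hPsge i h] at hi
            rw [Finset.mem_singleton] at hi
            exact Or.inl hi
    have heq := hGmax _ hmem (Finset.subset_insert k G)
    have hkG : k ∈ G := by rw [heq]; exact Finset.mem_insert_self k G
    exact absurd (hkgt k hkG) (lt_irrefl k)
  have hrm' : r = G.min' hGne := le_antisymm (le_trans hrn hnm) hrm
  -- each piece is maximal
  have hGsmax : ∀ i, Gs i ∈ famMax (Ss.S β) := by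
    intro i0
    refine ⟨hGsmem i0, ?_⟩
    intro H hH hsub
    by_contra hneH
    set z := G.max' hGne + 1 with hz
    have hzgt : ∀ x ∈ G, x < z := fun x hx => Nat.lt_succ_of_le (G.le_max' x hx)
    have hz1 : 1 ≤ z := Nat.succ_le_succ (Nat.zero_le _)
    obtain ⟨P', h1', h2', h3'⟩ := SchreierAux.ext_aux Ss β (SchreierAux.add Ss β hβω)
      (SchreierAux.hered Ss β hβω) (SchreierAux.pos Ss β hβω) r Gs i0 H (by omega)
      hGsmem hGsord hsub hneH hH z hz1 (fun j x hx => hzgt x (hGsG j x hx))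
    have hmem : insert z G ∈ Ss.S (β + 1) := by
      rw [Ss.S_succ β hβω]
      refine ⟨r, P', h1', h2', ?_, ?_⟩
      · intro x hx
        rcases Finset.mem_insert.1 hx with rfl | hx'
        · have := G.le_max' _ hmG
          omega
        · have := hmle x hx'
          omega
      · rw [h3', hGsU]
    have heq := hGmax _ hmem (Finset.subset_insert z G)
    have hzG : z ∈ G := by rw [heq]; exact Finset.mem_insert_self z G
    exact absurd (hzgt z hzG) (lt_irrefl z)
  refine ⟨r, Gs, hGsmax, hGsord, hGsU.symm, ?_, ?_⟩
  · rw [hrm']; exact hmG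
  · intro x hx; rw [hrm']; exact hmle x hx
end
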